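/- Two modules Ω(λ,α,μ,β) and Ω(λ',α',μ',β') over the map Heisenberg–Virasoro algebra HV⊗ℂ[b₁,…,b_k] are isomorphic if and only if λ=λ', α=α', μ=μ', and β=β'. -/

import Mathlib

open Polynomial

/-- The action of `d_n ⊗ b^r` on `Ω(λ,α,μ,β) = ℂ[t]`. -/
noncomputable def Dop {k : ℕ} (lam alpha : ℂ) (mu : Fin k → ℂ)
    (n : ℤ) (r : Fin k → ℕ) (f : ℂ[X]) : ℂ[X] :=
  ((∏ i, mu i ^ r i) * lam ^ (n - ∑ i, (r i : ℤ))) •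
    (f.comp (X - C (n : ℂ)) * (X - C ((n : ℂ) * alpha)))

/-- The action of `I_n ⊗ b^r` on `Ω(λ,α,μ,β) = ℂ[t]`. -/
noncomputable def Iop {k : ℕ} (lam beta : ℂ) (mu : Fin k → ℂ)
    (n : ℤ) (r : Fin k → ℕ) (f : ℂ[X]) : ℂ[X] :=
  ((∏ i, mu i ^ r i) * lam ^ (n - ∑ i, (r i : ℤ)) * beta) • f.comp (X - C (n : ℂ))

/-- `Dop` is multiplicative with respect to constants on the right. -/
theorem Dop_mul_C {k : ℕ} (lam alpha : ℂ) (mu : Fin k → ℂ)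
    (n : ℤ) (r : Fin k → ℕ) (f : ℂ[X]) (c : ℂ) :
    Dop lam alpha mu n r (f * C c) = Dop lam alpha mu n r f * C c := by
  simp only [Dop, Polynomial.mul_comp, Polynomial.C_comp, Polynomial.smul_eq_C_mul]
  ring

/-- `Iop` is multiplicative with respect to constants on the right. -/
theorem Iop_mul_C {k : ℕ} (lam beta : ℂ) (mu : Fin k → ℂ)
    (n : ℤ) (r : Fin k → ℕ) (f : ℂ[X]) (c : ℂ) :
    Iop lam beta mu n r (f * C c) = Iop lam beta mu n r f * C c := by
  simp only [Iop, Polynomial.mul_comp, Polynomial.C_comp, Polynomial.smul_eq_C_mul]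
  ring

/-- Two modules `Ω(λ,α,μ,β)` and `Ω(λ',α',μ',β')` over the map Heisenberg–Virasoro
algebra `HV ⊗ ℂ[b₁,…,b_k]` are isomorphic (i.e., there is a ℂ-linear equivalence
of `ℂ[t]` intertwining all the actions; central elements act by zero on both)
iff `λ = λ'`, `α = α'`, `μ = μ'` and `β = β'`. -/
theorem stmt18 {k : ℕ} (lam lam' alpha alpha' beta beta' : ℂ)
    (hlam : lam ≠ 0) (hlam' : lam' ≠ 0) (mu mu' : Fin k → ℂ) :
    (∃ e : ℂ[X] ≃ₗ[ℂ] ℂ[X], ∀ (n : ℤ) (r : Fin k → ℕ) (f : ℂ[X]),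
        e (Dop lam alpha mu n r f) = Dop lam' alpha' mu' n r (e f) ∧
        e (Iop lam beta mu n r f) = Iop lam' beta' mu' n r (e f))
      ↔ (lam = lam' ∧ alpha = alpha' ∧ mu = mu' ∧ beta = beta') := by
  constructor
  · rintro ⟨e, he⟩
    -- e commutes with multiplication by X
    have hX : ∀ f : ℂ[X], e (f * X) = e f * X := by
      intro f
      have h := (he 0 0 f).1
      simpa [Dop] using h
    -- e f = f * e 1
    have hmul : ∀ f : ℂ[X], e f = f * e 1 := by
      intro f
      induction f using Polynomial.induction_on' with
      | add p q hp hq => rw [map_add, hp, hq, add_mul]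
      | monomial n a =>
        induction n with
        | zero =>
          rw [Polynomial.monomial_zero_left, ← Polynomial.smul_eq_C_mul, ← map_smul]
          congr 1
          rw [Polynomial.smul_eq_C_mul, mul_one]
        | succ m ih =>
          have hm : (monomial (m+1) a : ℂ[X]) = monomial m a * X := by
            rw [Polynomial.monomial_mul_X]
          rw [hm, hX, ih]; ring
    -- e 1 is a nonzero constant
    obtain ⟨g, hg⟩ := e.surjective 1
    have hunit : IsUnit (e 1) := IsUnit.of_mul_eq_one g (by rw [mul_comm, ← hmul, hg])
    obtain ⟨c, -, hc⟩ := Polynomial.isUnit_iff.mp hunit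
    have hc0 : c ≠ 0 := by
      rintro rfl
      rw [map_zero] at hc
      exact one_ne_zero (e.injective (hc.symm.trans (map_zero e).symm))
    have hCc : (C c : ℂ[X]) ≠ 0 := by simpa using hc0
    -- the operators agree
    have hD : ∀ (n : ℤ) (r : Fin k → ℕ) (f : ℂ[X]),
        Dop lam alpha mu n r f = Dop lam' alpha' mu' n r f := by
      intro n r f
      have h := (he n r f).1
      rw [hmul (Dop lam alpha mu n r f), hmul f, ← hc, Dop_mul_C] at h
      exact mul_right_cancel₀ hCc h
    have hI : ∀ (n : ℤ) (r : Fin k → ℕ) (f : ℂ[X]),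
        Iop lam beta mu n r f = Iop lam' beta' mu' n r f := by
      intro n r f
      have h := (he n r f).2
      rw [hmul (Iop lam beta mu n r f), hmul f, ← hc, Iop_mul_C] at h
      exact mul_right_cancel₀ hCc h
    -- extract the parameters
    have h1 : lam • (X - C alpha) = lam' • (X - C alpha') := by
      have := hD 1 0 1
      simpa [Dop] using this
    have hl : lam = lam' := by
      have := congrArg (fun p => p.coeff 1) h1
      simpa [coeff_smul] using this
    subst hl
    have ha : alpha = alpha' := by
      have := congrArg (fun p => p.coeff 0) h1
      simp only [coeff_smul, coeff_sub, coeff_X_zero, coeff_C_zero, smul_eq_mul] at this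
      have h2 : lam * alpha = lam * alpha' := by linear_combination -this
      exact mul_left_cancel₀ hlam h2
    have hb : beta = beta' := by
      have := congrArg (fun p => p.coeff 0) (hI 0 0 1)
      simpa [Iop, coeff_smul] using this
    refine ⟨rfl, ha, ?_, hb⟩
    funext i
    have hprod : ∀ (m : Fin k → ℂ), (∏ j, m j ^ (Pi.single i 1 : Fin k → ℕ) j) = m i := by
      intro m
      rw [Finset.prod_eq_single i]
      · simp
      · intro j _ hj; simp [Pi.single_eq_of_ne hj]
      · simp
    have hsum : (∑ j, ((Pi.single i 1 : Fin k → ℕ) j : ℤ)) = 1 := by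
      rw [Finset.sum_eq_single i]
      · simp
      · intro j _ hj; simp [Pi.single_eq_of_ne hj]
      · simp
    have h2 := congrArg (fun p => p.coeff 1) (hD 0 (Pi.single i 1) 1)
    simp only [Dop, hprod, hsum, Int.cast_zero, sub_zero, one_mul, mul_zero, C_0,
      Polynomial.one_comp, coeff_smul, coeff_X_one, smul_eq_mul, mul_one, zero_mul,
      coeff_sub, coeff_C, if_neg (one_ne_zero)] at h2
    have hz : lam ^ ((0:ℤ) - 1) ≠ 0 := zpow_ne_zero _ hlam
    exact mul_right_cancel₀ hz h2
  · rintro ⟨rfl, rfl, rfl, rfl⟩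
    exact ⟨LinearEquiv.refl ℂ ℂ[X], fun n r f => ⟨rfl, rfl⟩⟩
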